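/- Fix r > q ≥ log 6. Let Ω ⊂ ℂ be a domain whose complement contains at least two points, and suppose the annulus A = {z : d·e^{-r} < |z - o| < d·e^r} is contained in Ω with o ∈ ℂ \ Ω. Then for every z with d·e^{-(r-q)} < |z - o| < d·e^{r-q} and every nearest boundary point ζ ∈ ∂Ω of z, the annulus {w : dist(z,∂Ω)·e^{-q/2} ≤ |w - ζ| ≤ dist(z,∂Ω)·e^{q/2}} is contained in A (and hence in Ω). -/

import Mathlib

private lemma bp_arith_outer {d F y δ ρ : ℝ} (hd : 0 < d) (hF : 0 < F)
    (hy6 : 6 ≤ y * y) (h : d * (F * (y * y)) ≤ δ + ρ) (hδρ : δ ≤ ρ)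
    (hρF : ρ < d * F) : False := by nlinarith [mul_pos hd hF]

private lemma bp_arith_low1 {d E y δ ρ s : ℝ} (hd : 0 < d) (hE : 0 < E)
    (hy2 : 2 ≤ y) (hy6 : 6 ≤ y * y) (hz1' : d * E * (y * y) < ρ)
    (hsE : s ≤ d * E) (t1 : ρ ≤ δ + s) : d * E * (2 * y) < δ := by
  nlinarith [mul_pos hd hE, sq_nonneg (y - 5/2)]

private lemma bp_arith_low2 {d E y δ b : ℝ} (hy0 : 0 < y)
    (hw1' : δ ≤ b * y) (hδlb : d * E * (2 * y) < δ) : 2 * (d * E) < b := by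
  nlinarith

private lemma bp_arith_up {d E F y a δ ρ s : ℝ} (hd : 0 < d) (hE0 : 0 < E)
    (hE1 : E ≤ 1) (hF1 : 1 ≤ F) (hy2 : 2 ≤ y) (hsE : s ≤ d * E)
    (h1 : a ≤ δ * y + s) (h2 : δ * y ≤ ρ * y) (h3 : ρ * y < d * F * y) :
    a < d * (F * (y * y)) := by
  have hy0 : (0:ℝ) ≤ y := by linarith
  have hF0 : (0:ℝ) ≤ F := by linarith
  have k1 : 2 * d ≤ d * F * y := by
    nlinarith [mul_nonneg (mul_nonneg hd.le (sub_nonneg.2 hF1)) hy0,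
      mul_nonneg hd.le (by linarith : (0:ℝ) ≤ y - 2)]
  have k2 : d * F * y * 2 ≤ d * F * (y * y) := by
    nlinarith [mul_nonneg (mul_nonneg (mul_nonneg hd.le hF0) hy0)
      (by linarith : (0:ℝ) ≤ y - 2)]
  have k3 : d * E ≤ d := by nlinarith
  nlinarith

/-- A point of `Ω` is within `dist z o` of the frontier, for any `o ∉ Ω`. -/
lemma infDist_frontier_le_dist {Ω : Set ℂ} (hΩo : IsOpen Ω) {z o : ℂ}
    (hz : z ∈ Ω) (ho : o ∉ Ω) : Metric.infDist z (frontier Ω) ≤ dist z o := by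
  by_contra h
  push_neg at h
  -- the segment from z to o misses the frontier
  have hseg : segment ℝ z o ⊆ Ω ∪ (closure Ω)ᶜ := by
    intro p hp
    have hdist : dist z p ≤ dist z o := by
      have h1 := dist_add_dist_of_mem_segment hp
      have h2 := dist_nonneg (x := p) (y := o)
      linarith
    have hpf : p ∉ frontier Ω := by
      intro hpf
      have := Metric.infDist_le_dist_of_mem (x := z) hpf
      linarith
    rcases em (p ∈ closure Ω) with hc | hc
    · left
      by_contra h'
      exact hpf (by rw [hΩo.frontier_eq]; exact ⟨hc, h'⟩)
    · right; exact hc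
  have hcov : segment ℝ z o ⊆ Ω :=
    (convex_segment z o).isPreconnected.subset_left_of_subset_union
      hΩo isClosed_closure.isOpen_compl
      (disjoint_compl_right.mono_left subset_closure) hseg
      ⟨z, left_mem_segment ℝ z o, hz⟩
  exact ho (hcov (right_mem_segment ℝ z o))

/-- Lower bound for the Beardon–Pommerenke function in the `q`-core of an annulus:
for `r > q ≥ log 6`, an annulus `A = {z : d·e^{-r} < |z-o| < d·e^r} ⊆ Ω` with `o ∉ Ω`,
any `z` in the `q`-core, and any nearest boundary point `ζ ∈ ∂Ω` of `z`,
the annulus `{w : δ(z)·e^{-q/2} ≤ |w-ζ| ≤ δ(z)·e^{q/2}}` is contained in `A`. -/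
theorem bp_lower_bound_annulus
    (Ω : Set ℂ) (hΩo : IsOpen Ω) (hΩc : IsConnected Ω) (hnt : Set.Nontrivial Ωᶜ)
    (o : ℂ) (d r q : ℝ) (hd : 0 < d) (hq : Real.log 6 ≤ q) (hrq : q < r) (ho : o ∉ Ω)
    (hA : ∀ z : ℂ, d * Real.exp (-r) < ‖z - o‖ →
      ‖z - o‖ < d * Real.exp r → z ∈ Ω)
    (z ζ : ℂ)
    (hz1 : d * Real.exp (-(r - q)) < ‖z - o‖)
    (hz2 : ‖z - o‖ < d * Real.exp (r - q))
    (hζ : ζ ∈ frontier Ω)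
    (hnear : ‖z - ζ‖ = Metric.infDist z (frontier Ω)) :
    ∀ w : ℂ,
      Metric.infDist z (frontier Ω) * Real.exp (-(q / 2)) ≤ ‖w - ζ‖ →
      ‖w - ζ‖ ≤ Metric.infDist z (frontier Ω) * Real.exp (q / 2) →
      d * Real.exp (-r) < ‖w - o‖ ∧ ‖w - o‖ < d * Real.exp r := by
  intro w hw1 hw2
  set δ := Metric.infDist z (frontier Ω) with hδdef
  set ρ := ‖z - o‖ with hρdef
  set s := ‖ζ - o‖ with hsdef
  set b := ‖w - ζ‖ with hbdef
  set a := ‖w - o‖ with hadef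
  set y := Real.exp (q / 2) with hydef
  set E := Real.exp (-r) with hEdef
  set F := Real.exp (r - q) with hFdef
  have hy0 : (0:ℝ) < y := Real.exp_pos _
  have hE0 : (0:ℝ) < E := Real.exp_pos _
  have hF0 : (0:ℝ) < F := Real.exp_pos _
  have hyy : y * y = Real.exp q := by rw [hydef, ← Real.exp_add]; ring_nf
  have hy6 : (6:ℝ) ≤ y * y := by
    rw [hyy]
    calc (6:ℝ) = Real.exp (Real.log 6) := by rw [Real.exp_log]; norm_num
    _ ≤ Real.exp q := Real.exp_le_exp.2 hq
  have hy2 : (2:ℝ) ≤ y := by nlinarith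
  -- rewrite the core hypotheses
  have hz1' : d * E * (y * y) < ρ := by
    have h0 : Real.exp (-(r - q)) = E * (y * y) := by
      rw [hyy, hEdef, ← Real.exp_add]; ring_nf
    calc d * E * (y * y) = d * Real.exp (-(r - q)) := by rw [h0]; ring
    _ < ρ := hz1
  have hErF : Real.exp r = F * (y * y) := by
    rw [hyy, hFdef, ← Real.exp_add]; ring_nf
  have hF1 : (1:ℝ) ≤ F := Real.one_le_exp (by linarith)
  have hE1 : E ≤ 1 := Real.exp_le_one_iff.2 (by nlinarith [Real.log_pos (by norm_num : (1:ℝ) < 6)])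
  -- z belongs to Ω
  have hzΩ : z ∈ Ω := by
    refine hA z ?_ ?_
    · refine lt_trans ?_ hz1
      have : Real.exp (-r) < Real.exp (-(r - q)) := by
        apply Real.exp_lt_exp.2
        nlinarith [Real.log_pos (by norm_num : (1:ℝ) < 6)]
      exact (mul_lt_mul_of_pos_left this hd)
    · refine lt_trans hz2 ?_
      have : Real.exp (r - q) < Real.exp r := by
        apply Real.exp_lt_exp.2
        nlinarith [Real.log_pos (by norm_num : (1:ℝ) < 6)]
      exact (mul_lt_mul_of_pos_left this hd)
  -- δ ≤ ρ
  have hδρ : δ ≤ ρ := by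
    have := infDist_frontier_le_dist hΩo hzΩ ho
    rwa [Complex.dist_eq, ← hρdef] at this
  -- ζ is not in Ω, hence not in the annulus A
  have hζΩ : ζ ∉ Ω := by
    rw [hΩo.frontier_eq] at hζ
    exact hζ.2
  have hζA : s ≤ d * E ∨ d * Real.exp r ≤ s := by
    by_contra hcon
    push_neg at hcon
    exact hζΩ (hA ζ hcon.1 hcon.2)
  -- triangle inequalities
  have tδ : ‖z - ζ‖ = δ := hnear
  have t1 : ρ ≤ δ + s := by
    have := dist_triangle z ζ o
    rwa [Complex.dist_eq, Complex.dist_eq, Complex.dist_eq, ← hρdef, hnear, ← hsdef] at this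
  have t2 : s ≤ δ + ρ := by
    have := dist_triangle ζ z o
    rw [Complex.dist_eq, Complex.dist_eq, Complex.dist_eq, ← hsdef, ← hρdef] at this
    have hsym : ‖ζ - z‖ = δ := by rw [norm_sub_rev, hnear]
    linarith [this, hsym.le, hsym.ge]
  have t3 : b ≤ a + s := by
    have := dist_triangle w o ζ
    rw [Complex.dist_eq, Complex.dist_eq, Complex.dist_eq, ← hbdef, ← hadef] at this
    have hsym : ‖o - ζ‖ = s := by rw [hsdef, norm_sub_rev]
    linarith [this, hsym.le]
  have t4 : a ≤ b + s := by
    have := dist_triangle w ζ o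
    rwa [Complex.dist_eq, Complex.dist_eq, Complex.dist_eq, ← hbdef, ← hadef, ← hsdef] at this
  -- rewrite hw1 without inverse
  have hw1' : δ ≤ b * y := by
    rw [Real.exp_neg, ← hydef, ← div_eq_mul_inv, div_le_iff₀ hy0] at hw1
    exact hw1
  -- the outer case is impossible
  have hsE : s ≤ d * E := by
    rcases hζA with h | h
    · exact h
    · exfalso
      rw [hErF] at h
      have hout : d * (F * (y*y)) ≤ δ + ρ := le_trans h t2
      exact bp_arith_outer hd hF0 hy6 hout hδρ hz2
  constructor
  · -- lower bound
    have hδlb : d * E * (2 * y) < δ := bp_arith_low1 hd hE0 hy2 hy6 hz1' hsE t1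
    have hb2 : 2 * (d * E) < b := bp_arith_low2 hy0 hw1' hδlb
    linarith
  · -- upper bound
    have h1 : a ≤ δ * y + s := by linarith [mul_le_mul_of_nonneg_right (le_of_eq rfl : b ≤ b) hy0.le, hw2]
    have h2 : δ * y ≤ ρ * y := mul_le_mul_of_nonneg_right hδρ hy0.le
    have h3 : ρ * y < d * F * y := by
      have := mul_lt_mul_of_pos_right hz2 hy0
      linarith [this]
    rw [hErF]
    exact bp_arith_up hd hE0 hE1 hF1 hy2 hsE h1 h2 h3
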